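/- Let n be a positive integer with gcd(j, 3n) = 1 and q = exp(2πij/(3n)). Then the sum over k from 1 to n of 1/(1 - q^{3k-1}) equals (n/3)·(1 - q^n). -/

import Mathlib

open Finset Complex Real

lemma aux_sum_mul_pow (x : ℂ) (m : ℕ) :
    (1 - x) * ∑ t ∈ Finset.range m, (t : ℂ) * x ^ t
      = (∑ t ∈ Finset.range m, x ^ t) - 1 - ((m : ℂ) - 1) * x ^ m := by
  induction m with
  | zero => simp
  | succ m ih =>
    rw [Finset.sum_range_succ, Finset.sum_range_succ (fun t => x ^ t)]
    push_cast
    ring_nf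
    ring_nf at ih
    linear_combination ih

lemma aux_one_div_one_sub (N : ℕ) (hN : N ≠ 0) (x : ℂ) (hxN : x ^ N = 1) (hx1 : x ≠ 1) :
    1 / (1 - x) = (-1 / (N : ℂ)) * ∑ t ∈ Finset.range N, (t : ℂ) * x ^ t := by
  have hgeo : ∑ t ∈ Finset.range N, x ^ t = 0 := by
    rw [geom_sum_eq hx1, hxN]; simp
  have h := aux_sum_mul_pow x N
  rw [hgeo, hxN] at h
  have hx : (1 : ℂ) - x ≠ 0 := by
    intro h0; exact hx1 (by linear_combination -h0)
  have hN' : (N : ℂ) ≠ 0 := Nat.cast_ne_zero.mpr hN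
  rw [div_eq_iff hx]
  field_simp
  linear_combination h

theorem sum_one_div_one_sub_q_pow_three_k_sub_one
    (n j : ℕ) (hn : 0 < n) (hj : Nat.gcd j (3 * n) = 1)
    (q : ℂ) (hq : q = Complex.exp (2 * Real.pi * Complex.I * j / (3 * n))) :
    ∑ k ∈ Finset.Icc 1 n, 1 / (1 - q ^ (3 * k - 1)) = (n : ℂ) / 3 * (1 - q ^ n) := by
  have h3n : (3 * n) ≠ 0 := by omega
  have hprim : IsPrimitiveRoot q (3 * n) := by
    have h := Complex.isPrimitiveRoot_exp (3 * n) h3n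
    have hq' : q = (Complex.exp (2 * Real.pi * Complex.I / ((3 * n : ℕ) : ℂ))) ^ j := by
      rw [hq, ← Complex.exp_nat_mul]
      congr 1
      push_cast
      ring
    rw [hq']
    exact h.pow_of_coprime j hj
  have hq3n : q ^ (3 * n) = 1 := hprim.pow_eq_one
  have hpow_one : ∀ l : ℕ, q ^ l = 1 ↔ 3 * n ∣ l := fun l => hprim.pow_eq_one_iff_dvd l
  have hqn : q ^ n ≠ 1 := by
    intro h
    rw [hpow_one n] at h
    have := Nat.le_of_dvd hn h
    omega
  have hcube : 1 + q ^ n + q ^ (2 * n) = 0 := by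
    have h' : q ^ n * q ^ n * q ^ n = 1 := by
      rw [← pow_add, ← pow_add, show n + n + n = 3 * n by ring]; exact hq3n
    have h2 : q ^ (2 * n) = q ^ n * q ^ n := by
      rw [← pow_add]; congr 1; ring
    have h : (q ^ n - 1) * (1 + q ^ n + q ^ (2 * n)) = 0 := by
      rw [h2]; linear_combination h'
    rcases mul_eq_zero.mp h with h | h
    · exact absurd (by linear_combination h) hqn
    · exact h
  -- reindex to range n
  rw [← Finset.Ico_add_one_right_eq_Icc, Finset.sum_Ico_eq_sum_range]
  simp only [Nat.add_sub_cancel]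
  have hstep1 : ∀ i ∈ Finset.range n,
      1 / (1 - q ^ (3 * (1 + i) - 1)) =
        (-1 / ((3 * n : ℕ) : ℂ)) * ∑ t ∈ Finset.range (3 * n),
          (t : ℂ) * ((q ^ (3 * t)) ^ i * q ^ (2 * t)) := by
    intro i hi
    have hi' : i < n := Finset.mem_range.mp hi
    have he : 3 * (1 + i) - 1 = 3 * i + 2 := by omega
    rw [he]
    have hne : q ^ (3 * i + 2) ≠ 1 := by
      intro h
      rw [hpow_one] at h
      have h3 : (3 : ℕ) ∣ 3 * i + 2 := dvd_trans ⟨n, rfl⟩ h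
      omega
    have hx1 : (q ^ (3 * i + 2)) ^ (3 * n) = 1 := by
      rw [← pow_mul, mul_comm (3 * i + 2), pow_mul, hq3n, one_pow]
    rw [aux_one_div_one_sub (3 * n) h3n _ hx1 hne]
    congr 1
    apply Finset.sum_congr rfl
    intro t _
    congr 1
    rw [← pow_mul, ← pow_mul, ← pow_add]
    congr 1
    ring
  rw [Finset.sum_congr rfl hstep1, ← Finset.mul_sum, Finset.sum_comm]
  have hinner : ∀ t ∈ Finset.range (3 * n),
      ∑ i ∈ Finset.range n, (t : ℂ) * ((q ^ (3 * t)) ^ i * q ^ (2 * t)) =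
        (t : ℂ) * q ^ (2 * t) * (if n ∣ t then (n : ℂ) else 0) := by
    intro t _
    have hfact : ∀ i : ℕ, (t : ℂ) * ((q ^ (3 * t)) ^ i * q ^ (2 * t)) =
        (t : ℂ) * q ^ (2 * t) * (q ^ (3 * t)) ^ i := by intro i; ring
    simp only [hfact]
    rw [← Finset.mul_sum]
    congr 1
    by_cases hd : n ∣ t
    · have : q ^ (3 * t) = 1 := by
        rw [hpow_one]
        exact mul_dvd_mul_left 3 hd
      simp [this, hd]
    · have hne : q ^ (3 * t) ≠ 1 := by
        intro h
        rw [hpow_one] at h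
        exact hd ((mul_dvd_mul_iff_left (by norm_num : (3:ℕ) ≠ 0)).mp h)
      rw [geom_sum_eq hne]
      have : (q ^ (3 * t)) ^ n = 1 := by
        rw [← pow_mul, show 3 * t * n = 3 * n * t by ring, pow_mul, hq3n, one_pow]
      rw [this]
      simp [hd]
  rw [Finset.sum_congr rfl hinner]
  -- restrict to {0, n, 2n}
  have hsub : ({0, n, 2 * n} : Finset ℕ) ⊆ Finset.range (3 * n) := by
    intro x hx
    simp only [Finset.mem_insert, Finset.mem_singleton] at hx
    rcases hx with rfl | rfl | rfl <;> simp [Finset.mem_range] <;> omega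
  have hvan : ∀ t ∈ Finset.range (3 * n), t ∉ ({0, n, 2 * n} : Finset ℕ) →
      (t : ℂ) * q ^ (2 * t) * (if n ∣ t then (n : ℂ) else 0) = 0 := by
    intro t ht hts
    simp only [Finset.mem_insert, Finset.mem_singleton, not_or] at hts
    rw [Finset.mem_range] at ht
    have : ¬ n ∣ t := by
      rintro ⟨c, rfl⟩
      have hc : c < 3 := by nlinarith
      interval_cases c <;> omega
    simp [this]
  rw [← Finset.sum_subset hsub hvan]
  have h0n : (0 : ℕ) ∉ ({n, 2 * n} : Finset ℕ) := by simp; omega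
  have hn2n : n ∉ ({2 * n} : Finset ℕ) := by simp; omega
  rw [Finset.sum_insert h0n, Finset.sum_insert hn2n, Finset.sum_singleton]
  have h4n : q ^ (2 * (2 * n)) = q ^ n := by
    rw [show 2 * (2 * n) = 3 * n + n by ring, pow_add, hq3n, one_mul]
  rw [h4n]
  simp only [Nat.cast_zero, Nat.cast_mul, Nat.cast_ofNat, zero_mul,
    dvd_refl, if_pos, Nat.dvd_mul_left, zero_add]
  have hn' : (n : ℂ) ≠ 0 := Nat.cast_ne_zero.mpr hn.ne'
  field_simp
  linear_combination (-1 : ℂ) * hcube
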